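/- arXiv:1610.00027 — 5 statements merged into one kernel-verified Lean document; each statement's English description precedes it below -/
import Mathlib

section
/- Let a, c, d be real numbers with d ≥ 0, and let √ denote the principal branch of the complex square root (nonnegative real part). Then Re √(c² - (a - di)²) ≥ d. -/
open Complex

/-- The principal branch of the complex square root (nonnegative real part). -/
noncomputable def csqrt (z : ℂ) : ℂ := z ^ (1 / 2 : ℂ)

theorem stmt_4 (a c d : ℝ) (hd : 0 ≤ d) :
    d ≤ (csqrt ((c : ℂ) ^ 2 - ((a : ℂ) - d * Complex.I) ^ 2)).re := by
  set z : ℂ := (c : ℂ) ^ 2 - ((a : ℂ) - d * Complex.I) ^ 2 with hz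
  have hre : z.re = c ^ 2 - a ^ 2 + d ^ 2 := by simp [hz, Complex.ext_iff, pow_two]; ring
  have him : z.im = 2 * a * d := by simp [hz, Complex.ext_iff, pow_two]; ring
  have key : a ^ 2 + d ^ 2 - c ^ 2 ≤ ‖z‖ := by
    rcases le_or_gt (a ^ 2 + d ^ 2 - c ^ 2) 0 with h | h
    · exact h.trans (norm_nonneg _)
    · have habs : ‖z‖ = Real.sqrt ((c ^ 2 - a ^ 2 + d ^ 2) ^ 2 + (2 * a * d) ^ 2) := by
        rw [Complex.norm_def, Complex.normSq_apply, hre, him]; ring_nf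
      rw [habs]
      rw [show (a ^ 2 + d ^ 2 - c ^ 2 : ℝ) = Real.sqrt ((a ^ 2 + d ^ 2 - c ^ 2) ^ 2) from
        (Real.sqrt_sq h.le).symm]
      apply Real.sqrt_le_sqrt
      nlinarith [sq_nonneg (c * d)]
  have hres : (csqrt z).re = Real.sqrt ((‖z‖ + z.re) / 2) := by
    unfold csqrt
    rw [show (1 / 2 : ℂ) = (2⁻¹ : ℂ) by norm_num, Complex.cpow_inv_two_re]
  rw [hres]
  rw [show d = Real.sqrt (d ^ 2) from (Real.sqrt_sq hd).symm]
  apply Real.sqrt_le_sqrt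
  rw [hre]
  nlinarith [key]
end

section
/- Let τ, γ ∈ ℝ with γ > 0 and let η ∈ ℝ^{d-1}. Then Re √(|η|² - (τ - iγ)²) ≥ γ > 0; in particular |η|² - (τ - iγ)² is not a nonpositive real number and the principal square root has strictly positive real part. -/
open Complex

theorem stmt_5 {k : ℕ} (τ γ : ℝ) (hγ : 0 < γ) (η : EuclideanSpace ℝ (Fin k)) :
    γ ≤ (csqrt ((‖η‖ ^ 2 : ℂ) - ((τ : ℂ) - γ * Complex.I) ^ 2)).re ∧
    0 < (csqrt ((‖η‖ ^ 2 : ℂ) - ((τ : ℂ) - γ * Complex.I) ^ 2)).re ∧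
    ¬ ∃ r : ℝ, r ≤ 0 ∧ (‖η‖ ^ 2 : ℂ) - ((τ : ℂ) - γ * Complex.I) ^ 2 = (r : ℂ) := by
  set z : ℂ := (‖η‖ ^ 2 : ℂ) - ((τ : ℂ) - γ * Complex.I) ^ 2 with hz
  have hre : z.re = ‖η‖ ^ 2 - τ ^ 2 + γ ^ 2 := by rw [hz]; simp [pow_two]; ring
  have him : z.im = 2 * τ * γ := by rw [hz]; simp [pow_two]; ring
  have habs : (‖z‖) ^ 2 = z.re ^ 2 + z.im ^ 2 := by
    rw [Complex.sq_norm, Complex.normSq_apply]; ring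
  have habsnn : 0 ≤ ‖z‖ := norm_nonneg z
  have hN : 0 ≤ ‖η‖ ^ 2 := sq_nonneg _
  have hkey : γ ^ 2 ≤ (‖z‖ + z.re) / 2 := by
    rw [hre, him] at habs; rw [hre]
    nlinarith [sq_nonneg (‖z‖ - (γ ^ 2 + τ ^ 2 - ‖η‖ ^ 2)),
      sq_nonneg (‖z‖ + (γ ^ 2 + τ ^ 2 - ‖η‖ ^ 2)), sq_nonneg (γ * τ)]
  have hmain : γ ≤ (csqrt z).re := by
    have : (csqrt z).re = Real.sqrt ((‖z‖ + z.re) / 2) := by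
      rw [csqrt, show (1 / 2 : ℂ) = (2⁻¹ : ℂ) by norm_num, Complex.cpow_inv_two_re]
    rw [this]
    exact (Real.le_sqrt hγ.le (le_trans (sq_nonneg γ) hkey)).mpr hkey
  refine ⟨hmain, lt_of_lt_of_le hγ hmain, ?_⟩
  rintro ⟨r, hr, hzr⟩
  have h1 : z.re = r := by rw [hzr]; simp
  have h2 : z.im = 0 := by rw [hzr]; simp
  have hτ : τ = 0 := by
    rw [him] at h2; nlinarith
  rw [hre, hτ] at h1
  nlinarith
end

section
/- Let b ∈ ℝ^{d-1}, τ, γ ∈ ℝ with γ > 0, and η ∈ ℝ^{d-1}. Then |√(|η|² - (τ - iγ)²) + i(b·η)| ≥ γ, where √ denotes the principal square root and b·η is the real inner product. -/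
open Complex
open scoped InnerProductSpace

theorem stmt_6 {k : ℕ} (b η : EuclideanSpace ℝ (Fin k)) (τ γ : ℝ) (hγ : 0 < γ) :
    γ ≤ Norm.norm
      (csqrt ((‖η‖ ^ 2 : ℂ) - ((τ : ℂ) - γ * Complex.I) ^ 2)
        + Complex.I * (⟪b, η⟫_ℝ : ℂ)) := by
  set z : ℂ := (‖η‖ ^ 2 : ℂ) - ((τ : ℂ) - γ * Complex.I) ^ 2 with hz
  have hre : z.re = ‖η‖ ^ 2 - τ ^ 2 + γ ^ 2 := by
    simp [hz, Complex.sub_re, pow_two, Complex.mul_re,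
      Complex.mul_im]
    ring
  have him : z.im = 2 * τ * γ := by
    simp [hz, pow_two, Complex.mul_im]
    ring
  have habs : γ ^ 2 ≤ (‖z‖ + z.re) / 2 := by
    have h1 : ‖z‖ ≥ 2 * γ ^ 2 - z.re := by
      rcases le_or_gt (2 * γ ^ 2 - z.re) 0 with h | h
      · exact le_trans h (norm_nonneg z)
      · have hsq : (2 * γ ^ 2 - z.re) ^ 2 ≤ (‖z‖) ^ 2 := by
          rw [Complex.sq_norm, Complex.normSq_apply, hre, him]
          nlinarith [sq_nonneg (‖η‖ : ℝ), sq_nonneg τ, sq_nonneg γ, hγ.le,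
            mul_nonneg (sq_nonneg γ) (sq_nonneg (‖η‖ : ℝ))]
        nlinarith [norm_nonneg z]
    linarith
  have hw : γ ≤ (csqrt z).re := by
    rw [csqrt, one_div, Complex.cpow_inv_two_re]
    exact (Real.le_sqrt hγ.le (le_trans (sq_nonneg γ) habs)).mpr habs
  have hRe : (csqrt z + Complex.I * (⟪b, η⟫_ℝ : ℂ)).re = (csqrt z).re := by
    simp
  calc γ ≤ (csqrt z + Complex.I * (⟪b, η⟫_ℝ : ℂ)).re := by rw [hRe]; exact hw
    _ ≤ |(csqrt z + Complex.I * (⟪b, η⟫_ℝ : ℂ)).re| := le_abs_self _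
    _ ≤ Norm.norm _ := Complex.abs_re_le_norm _
end

section
/- Let τ, γ ∈ ℝ with γ > 0, m ≥ 0, ε, μ > 0, and suppose τ² + m + γ² = 1. Set ξ with |ξ|² = |m - εμ(τ - iγ)²|. Then for all α, β ∈ ℂ with |α|² + |β|² = 1 there is a constant c > 0 (depending only on ε, μ) with |α|² μ²(τ² + γ²) + |β|² |ξ|² ≥ c γ², and moreover τ² + γ² + |ξ|² is bounded above and below by positive constants depending only on ε, μ. -/
open Complex

set_option maxHeartbeats 1000000 in
theorem stmt_15 (ε μ : ℝ) (hε : 0 < ε) (hμ : 0 < μ) :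
    ∃ c C₁ C₂ : ℝ, 0 < c ∧ 0 < C₁ ∧ 0 < C₂ ∧
      ∀ τ γ m : ℝ, 0 < γ → 0 ≤ m → τ ^ 2 + m + γ ^ 2 = 1 →
        (∀ α β : ℂ, ‖α‖ ^ 2 + ‖β‖ ^ 2 = 1 →
          c * γ ^ 2 ≤ ‖α‖ ^ 2 * μ ^ 2 * (τ ^ 2 + γ ^ 2)
            + ‖β‖ ^ 2 *
              ‖(m : ℂ) - (ε : ℂ) * μ * ((τ : ℂ) - γ * Complex.I) ^ 2‖) ∧
        C₁ ≤ τ ^ 2 + γ ^ 2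
            + ‖(m : ℂ) - (ε : ℂ) * μ * ((τ : ℂ) - γ * Complex.I) ^ 2‖ ∧
        τ ^ 2 + γ ^ 2
            + ‖(m : ℂ) - (ε : ℂ) * μ * ((τ : ℂ) - γ * Complex.I) ^ 2‖ ≤ C₂ := by
  have he0 : 0 < ε * μ := by positivity
  set e := ε * μ with he
  refine ⟨min (μ ^ 2) (e / 2), min (min (1/2) (1/(4*e))) (1/4), 2 + e,
    ?_, ?_, ?_, ?_⟩
  · positivity
  · positivity
  · positivity
  intro τ γ m hγ hm hsum
  have key : ‖(m : ℂ) - (ε : ℂ) * μ * ((τ : ℂ) - γ * Complex.I) ^ 2‖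
      = Real.sqrt ((m - e * (τ^2 - γ^2))^2 + (2*e*τ*γ)^2) := by
    rw [show ((m : ℂ) - (ε : ℂ) * μ * ((τ : ℂ) - γ * Complex.I) ^ 2)
        = ((m - e * (τ^2 - γ^2) : ℝ) : ℂ) + ((2*e*τ*γ : ℝ) : ℂ) * Complex.I by
      rw [he]
      push_cast
      ring_nf
      rw [Complex.I_sq]
      ring]
    exact Complex.norm_add_mul_I _ _
  rw [key]
  set A := m - e * (τ^2 - γ^2) with hA
  set B := 2*e*τ*γ with hB
  set S := Real.sqrt (A^2 + B^2) with hS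
  have hS0 : 0 ≤ S := Real.sqrt_nonneg _
  have hS2 : S ^ 2 = A ^ 2 + B ^ 2 := Real.sq_sqrt (by positivity)
  have ht1 : τ ^ 2 + γ ^ 2 ≤ 1 := by nlinarith
  -- lower bound S ≥ e γ² / 2
  have hlow : e * γ ^ 2 / 2 ≤ S := by
    have hsq : (e * γ ^ 2 / 2) ^ 2 ≤ A ^ 2 + B ^ 2 := by
      rcases le_or_gt (2 * e * τ ^ 2) (m + e * γ ^ 2) with h | h
      · have hA2 : e * γ ^ 2 / 2 ≤ A := by rw [hA]; nlinarith
        nlinarith [sq_nonneg B, mul_nonneg he0.le (sq_nonneg γ)]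
      · have hτ : γ ^ 2 / 2 < τ ^ 2 := by nlinarith
        have hB2 : (e * γ ^ 2 / 2) ^ 2 ≤ B ^ 2 := by
          rw [hB]
          nlinarith [mul_nonneg (mul_nonneg (sq_nonneg e) (sq_nonneg γ))
            (by linarith : (0:ℝ) ≤ τ ^ 2 - γ ^ 2 / 2)]
        nlinarith [sq_nonneg A]
    calc e * γ ^ 2 / 2 = Real.sqrt ((e * γ ^ 2 / 2) ^ 2) := (Real.sqrt_sq (by positivity)).symm
      _ ≤ S := Real.sqrt_le_sqrt hsq
  -- upper bound S ≤ m + e(τ²+γ²)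
  have hup : S ≤ m + e * (τ ^ 2 + γ ^ 2) := by
    have h1 : A ^ 2 + B ^ 2 ≤ (m + e * (τ ^ 2 + γ ^ 2)) ^ 2 := by
      rw [hA, hB]
      nlinarith [mul_nonneg hm (mul_nonneg he0.le (sq_nonneg τ))]
    calc S ≤ Real.sqrt ((m + e * (τ ^ 2 + γ ^ 2)) ^ 2) := Real.sqrt_le_sqrt h1
      _ = m + e * (τ ^ 2 + γ ^ 2) := Real.sqrt_sq (by positivity)
  refine ⟨?_, ?_, ?_⟩
  · intro α β hab
    have ha0 : 0 ≤ ‖α‖ ^ 2 := by positivity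
    have hb0 : 0 ≤ ‖β‖ ^ 2 := by positivity
    have hc1 : min (μ ^ 2) (e / 2) ≤ μ ^ 2 := min_le_left _ _
    have hc2 : min (μ ^ 2) (e / 2) ≤ e / 2 := min_le_right _ _
    have h1 : min (μ ^ 2) (e / 2) * γ ^ 2 ≤ μ ^ 2 * (τ ^ 2 + γ ^ 2) := by
      nlinarith [sq_nonneg γ, sq_nonneg τ, sq_nonneg μ]
    have h2 : min (μ ^ 2) (e / 2) * γ ^ 2 ≤ S := by nlinarith [sq_nonneg γ]
    nlinarith
  · rcases le_or_gt (min (1/2) (1/(4*e))) (τ ^ 2 + γ ^ 2) with h | h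
    · have h3 : min (min (1/2) (1/(4*e))) (1/4) ≤ min (1/2) (1/(4*e)) := min_le_left _ _
      linarith
    · have h1 : τ ^ 2 + γ ^ 2 < 1/2 := lt_of_lt_of_le h (min_le_left _ _)
      have h2 : τ ^ 2 + γ ^ 2 < 1/(4*e) := lt_of_lt_of_le h (min_le_right _ _)
      have hm2 : (1:ℝ)/2 ≤ m := by nlinarith
      have he2 : e * (τ ^ 2 + γ ^ 2) ≤ 1/4 := by
        rw [lt_div_iff₀ (by positivity)] at h2
        nlinarith
      have hA4 : (1:ℝ)/4 ≤ A := by rw [hA]; nlinarith [mul_nonneg he0.le (sq_nonneg γ)]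
      have hSA : A ≤ S := by
        calc A = Real.sqrt (A ^ 2) := (Real.sqrt_sq (by linarith)).symm
          _ ≤ S := Real.sqrt_le_sqrt (by nlinarith [sq_nonneg B])
      have h3 : min (min (1/2) (1/(4*e))) (1/4) ≤ 1/4 := min_le_right _ _
      nlinarith [sq_nonneg τ, sq_nonneg γ]
  · nlinarith
end

section
/- Let τ, γ ∈ ℝ with γ > 0, let A⁰, …, A^d be N×N Hermitian matrices with A⁰ = I, let η ∈ ℝ^{d-1}, and set G = -i(I(τ - iγ) + Σ_{j<d} Aʲηⱼ). Suppose U : [0,∞) → ℂᴺ is C¹ with U, U' ∈ L², U(∞) = 0, and A^d U'(x) = G U(x) + f(x) for all x ≥ 0 with f ∈ L². Then γ ∫₀^∞ |U|² dx ≤ Re ∫₀^∞ ⟨f(x), U(x)⟩ dx + ½ ⟨A^d U(0), U(0)⟩. -/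
open MeasureTheory Complex
open scoped InnerProductSpace

lemma stmt_19_key {N k : ℕ} (τ γ : ℝ) (Atang : Fin k → Matrix (Fin N) (Fin N) ℂ)
    (hAtang : ∀ j, (Atang j).IsHermitian) (η : Fin k → ℝ)
    (v fx : EuclideanSpace ℂ (Fin N)) :
    (⟪Matrix.toEuclideanLin
            ((-Complex.I) • ((((τ : ℂ) - γ * Complex.I)) • (1 : Matrix (Fin N) (Fin N) ℂ)
              + ∑ j, (η j : ℂ) • Atang j)) v + fx, v⟫_ℂ).re
      = -γ * ‖v‖ ^ 2 + (⟪fx, v⟫_ℂ).re := by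
  have hone : Matrix.toEuclideanLin (1 : Matrix (Fin N) (Fin N) ℂ) = LinearMap.id := by
    ext w; simp [Matrix.toEuclideanLin_apply, Matrix.one_mulVec]
  have him : ∀ j, (⟪Matrix.toEuclideanLin (Atang j) v, v⟫_ℂ).im = 0 := by
    intro j
    have h := (Matrix.isHermitian_iff_isSymmetric.mp (hAtang j)) v v
    have h2 : (starRingEnd ℂ) ⟪Matrix.toEuclideanLin (Atang j) v, v⟫_ℂ
        = ⟪Matrix.toEuclideanLin (Atang j) v, v⟫_ℂ := by
      rw [inner_conj_symm]; exact h.symm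
    exact Complex.conj_eq_iff_im.mp h2
  have hexp : Matrix.toEuclideanLin
            ((-Complex.I) • ((((τ : ℂ) - γ * Complex.I)) • (1 : Matrix (Fin N) (Fin N) ℂ)
              + ∑ j, (η j : ℂ) • Atang j)) v
      = (-Complex.I) • ((((τ : ℂ) - γ * Complex.I)) • v
          + ∑ j, (η j : ℂ) • Matrix.toEuclideanLin (Atang j) v) := by
    rw [_root_.map_smul, map_add, _root_.map_smul, map_sum, hone]
    simp only [LinearMap.smul_apply, LinearMap.add_apply, LinearMap.sum_apply,
      LinearMap.id_coe, id_eq]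
    congr 2
    exact Finset.sum_congr rfl fun j _ => by rw [_root_.map_smul]; rfl
  rw [inner_add_left, hexp, inner_smul_left, inner_add_left, inner_smul_left, sum_inner]
  simp_rw [inner_smul_left]
  rw [Complex.add_re, Complex.mul_re]
  simp only [map_neg, map_mul, Complex.conj_I, Complex.neg_re, Complex.neg_im, Complex.I_re,
    Complex.I_im, Complex.add_im, Complex.add_re, Complex.im_sum, Complex.re_sum, Complex.mul_im,
    Complex.mul_re, map_sub, Complex.conj_ofReal, Complex.sub_re, Complex.sub_im,
    Complex.ofReal_re, Complex.ofReal_im, him]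
  have h1 : (⟪v, v⟫_ℂ).re = ‖v‖ ^ 2 := by simpa using inner_self_eq_norm_sq (𝕜 := ℂ) v
  have h2 : (⟪v, v⟫_ℂ).im = 0 := by simpa using inner_self_im (𝕜 := ℂ) (x := v)
  rw [h1, h2]
  simp

theorem stmt_19 {N k : ℕ} (τ γ : ℝ) (hγ : 0 < γ)
    (Atang : Fin k → Matrix (Fin N) (Fin N) ℂ) (Ad : Matrix (Fin N) (Fin N) ℂ)
    (hAtang : ∀ j, (Atang j).IsHermitian) (hAd : Ad.IsHermitian)
    (η : Fin k → ℝ)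
    (U U' f : ℝ → EuclideanSpace ℂ (Fin N))
    (hderiv : ∀ x ∈ Set.Ici (0 : ℝ), HasDerivAt U (U' x) x)
    (hcont : ContinuousOn U' (Set.Ici (0 : ℝ)))
    (hU : MemLp U 2 (volume.restrict (Set.Ici (0 : ℝ))))
    (hU' : MemLp U' 2 (volume.restrict (Set.Ici (0 : ℝ))))
    (hf : MemLp f 2 (volume.restrict (Set.Ici (0 : ℝ))))
    (hlim : Filter.Tendsto U Filter.atTop (nhds 0))
    (hODE : ∀ x ∈ Set.Ici (0 : ℝ),
      Matrix.toEuclideanLin Ad (U' x)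
        = Matrix.toEuclideanLin
            ((-Complex.I) • ((((τ : ℂ) - γ * Complex.I)) • (1 : Matrix (Fin N) (Fin N) ℂ)
              + ∑ j, (η j : ℂ) • Atang j)) (U x) + f x) :
    γ * ∫ x in Set.Ioi (0 : ℝ), ‖U x‖ ^ 2
      ≤ (∫ x in Set.Ioi (0 : ℝ), (⟪f x, U x⟫_ℂ).re)
        + (1 / 2) * (⟪Matrix.toEuclideanLin Ad (U 0), U 0⟫_ℂ).re := by
  set L : EuclideanSpace ℂ (Fin N) →ₗ[ℂ] EuclideanSpace ℂ (Fin N) :=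
    Matrix.toEuclideanLin Ad with hLdef
  have hsym := Matrix.isHermitian_iff_isSymmetric.mp hAd
  -- pointwise identity
  have hkey : ∀ x ∈ Set.Ici (0 : ℝ),
      (⟪L (U' x), U x⟫_ℂ).re = -γ * ‖U x‖ ^ 2 + (⟪f x, U x⟫_ℂ).re := by
    intro x hx
    rw [hLdef, hODE x hx]
    exact stmt_19_key τ γ Atang hAtang η (U x) (f x)
  -- continuity of U on Ici 0
  have hUcont : ContinuousOn U (Set.Ici (0 : ℝ)) :=
    fun x hx => (hderiv x hx).continuousAt.continuousWithinAt
  -- continuous linear version of L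
  set Lc : EuclideanSpace ℂ (Fin N) →L[ℂ] EuclideanSpace ℂ (Fin N) :=
    LinearMap.toContinuousLinearMap L with hLc
  have hLcL : ∀ v, Lc v = L v := fun v => rfl
  -- derivative of the energy
  have hφ : ∀ x ∈ Set.Ici (0 : ℝ),
      HasDerivAt (fun t => (⟪L (U t), U t⟫_ℂ).re) (2 * (⟪L (U' x), U x⟫_ℂ).re) x := by
    intro x hx
    have hLU : HasDerivAt (fun t => L (U t)) (L (U' x)) x := by
      have := (Lc.restrictScalars ℝ).hasFDerivAt.comp_hasDerivAt x (hderiv x hx)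
      simpa [hLcL, Function.comp_def] using this
    have h1 := hLU.inner ℂ (hderiv x hx)
    have h2 := Complex.reCLM.hasFDerivAt.comp_hasDerivAt x h1
    have heq : (⟪L (U x), U' x⟫_ℂ + ⟪L (U' x), U x⟫_ℂ).re = 2 * (⟪L (U' x), U x⟫_ℂ).re := by
      have : ⟪L (U x), U' x⟫_ℂ = (starRingEnd ℂ) ⟪L (U' x), U x⟫_ℂ := by
        rw [hsym (U x) (U' x), ← inner_conj_symm]
      rw [Complex.add_re, this, Complex.conj_re]; ring
    have h3 : HasDerivAt (fun t => (⟪L (U t), U t⟫_ℂ).re)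
        ((⟪L (U x), U' x⟫_ℂ + ⟪L (U' x), U x⟫_ℂ).re) x := h2
    rwa [heq] at h3
  -- integrability of |U|^2 on Ioi 0
  have hIntU2 : IntegrableOn (fun x => ‖U x‖ ^ 2) (Set.Ioi (0 : ℝ)) volume := by
    have h := hU.integrable_norm_rpow (p := 2) (by norm_num) (by norm_num)
    have h' : Integrable (fun x => ‖U x‖ ^ 2) (volume.restrict (Set.Ici (0 : ℝ))) := by
      refine h.congr (Filter.Eventually.of_forall fun x => ?_)
      have h2 : ENNReal.toReal 2 = ((2:ℕ):ℝ) := by norm_num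
      simp only [h2, Real.rpow_natCast]
    exact h'.mono_measure (Measure.restrict_mono Set.Ioi_subset_Ici_self le_rfl)
  -- integrability of re⟪f, U⟫
  have hIntfU_Ici : IntegrableOn (fun x => (⟪f x, U x⟫_ℂ).re) (Set.Ici (0 : ℝ)) volume := by
    have h := L2.integrable_inner (𝕜 := ℂ) (hf.toLp f) (hU.toLp U)
    have h' : Integrable (fun x => ⟪f x, U x⟫_ℂ) (volume.restrict (Set.Ici (0 : ℝ))) := by
      refine h.congr ?_
      filter_upwards [hf.coeFn_toLp, hU.coeFn_toLp] with x h1 h2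
      rw [h1, h2]
    exact h'.re
  have hIntfU : IntegrableOn (fun x => (⟪f x, U x⟫_ℂ).re) (Set.Ioi (0 : ℝ)) volume :=
    hIntfU_Ici.mono_set Set.Ioi_subset_Ici_self
  -- FTC on [0, R]
  have hFTC : ∀ R : ℝ, 0 ≤ R →
      -(2 * γ) * (∫ t in (0:ℝ)..R, ‖U t‖ ^ 2)
        + 2 * (∫ t in (0:ℝ)..R, (⟪f t, U t⟫_ℂ).re)
      = (⟪L (U R), U R⟫_ℂ).re - (⟪L (U 0), U 0⟫_ℂ).re := by
    intro R hR
    have hsub : Set.uIcc (0:ℝ) R ⊆ Set.Ici (0:ℝ) := by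
      rw [Set.uIcc_of_le hR]
      exact fun t ht => ht.1
    have hcont2 : ContinuousOn (fun t => 2 * (⟪L (U' t), U t⟫_ℂ).re) (Set.uIcc (0:ℝ) R) := by
      apply ContinuousOn.mul continuousOn_const
      apply Complex.continuous_re.comp_continuousOn
      exact ((Lc.continuous.comp_continuousOn (hcont.mono hsub)).inner
        (hUcont.mono hsub))
    have hint : IntervalIntegrable (fun t => 2 * (⟪L (U' t), U t⟫_ℂ).re) volume 0 R :=
      hcont2.intervalIntegrable
    have heq := intervalIntegral.integral_eq_sub_of_hasDerivAt
      (f := fun t => (⟪L (U t), U t⟫_ℂ).re) (f' := fun t => 2 * (⟪L (U' t), U t⟫_ℂ).re)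
      (fun t ht => hφ t (hsub ht)) hint
    have hcongr : (∫ t in (0:ℝ)..R, 2 * (⟪L (U' t), U t⟫_ℂ).re)
        = ∫ t in (0:ℝ)..R, (-(2*γ) * ‖U t‖ ^ 2 + 2 * (⟪f t, U t⟫_ℂ).re) := by
      apply intervalIntegral.integral_congr
      intro t ht
      show 2 * (⟪L (U' t), U t⟫_ℂ).re = -(2*γ) * ‖U t‖ ^ 2 + 2 * (⟪f t, U t⟫_ℂ).re
      rw [hkey t (hsub ht)]; ring
    have hi1 : IntervalIntegrable (fun t => ‖U t‖ ^ 2) volume 0 R :=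
      ((hUcont.mono hsub).norm.pow 2).intervalIntegrable
    have hi2 : IntervalIntegrable (fun t => (⟪f t, U t⟫_ℂ).re) volume 0 R :=
      (hIntfU_Ici.mono_set hsub).intervalIntegrable
    rw [hcongr, intervalIntegral.integral_add (hi1.const_mul _) (hi2.const_mul _),
      intervalIntegral.integral_const_mul, intervalIntegral.integral_const_mul] at heq
    linarith [heq]
  -- limits
  set I1 := ∫ x in Set.Ioi (0:ℝ), ‖U x‖ ^ 2 with hI1
  set I2 := ∫ x in Set.Ioi (0:ℝ), (⟪f x, U x⟫_ℂ).re with hI2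
  set φ0 := (⟪L (U 0), U 0⟫_ℂ).re with hφ0
  have h1 : Filter.Tendsto (fun R => ∫ t in (0:ℝ)..R, ‖U t‖ ^ 2) Filter.atTop (nhds I1) :=
    intervalIntegral_tendsto_integral_Ioi 0 hIntU2 Filter.tendsto_id
  have h2 : Filter.Tendsto (fun R => ∫ t in (0:ℝ)..R, (⟪f t, U t⟫_ℂ).re)
      Filter.atTop (nhds I2) :=
    intervalIntegral_tendsto_integral_Ioi 0 hIntfU Filter.tendsto_id
  have h3 : Filter.Tendsto (fun R => (⟪L (U R), U R⟫_ℂ).re) Filter.atTop (nhds 0) := by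
    have hc : Continuous fun v : EuclideanSpace ℂ (Fin N) => (⟪Lc v, v⟫_ℂ).re :=
      Complex.continuous_re.comp (Continuous.inner Lc.continuous continuous_id)
    have := (hc.tendsto 0).comp hlim
    simpa [hLcL, Function.comp_def] using this
  have hF : Filter.Tendsto
      (fun R => -(2*γ) * (∫ t in (0:ℝ)..R, ‖U t‖ ^ 2)
        + 2 * (∫ t in (0:ℝ)..R, (⟪f t, U t⟫_ℂ).re))
      Filter.atTop (nhds (-(2*γ) * I1 + 2 * I2)) :=
    ((h1.const_mul _).add (h2.const_mul _))
  have hF' : Filter.Tendsto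
      (fun R => -(2*γ) * (∫ t in (0:ℝ)..R, ‖U t‖ ^ 2)
        + 2 * (∫ t in (0:ℝ)..R, (⟪f t, U t⟫_ℂ).re))
      Filter.atTop (nhds (0 - φ0)) := by
    apply Filter.Tendsto.congr' _ (h3.sub_const φ0)
    filter_upwards [Filter.eventually_ge_atTop (0:ℝ)] with R hR
    exact (hFTC R hR).symm
  have hmain := tendsto_nhds_unique hF hF'
  linarith [hmain]
end
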